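/- Let S and A be types with an applicability predicate app : A → S → Prop, a successor function succ : A → S → S, and a cost function cost : A → ℕ. Fix bounds minC, maxC : ℕ with minC ≤ cost a ≤ maxC for every action a. Define the augmented system on S × ℕ × ℕ by app' a (s, m, M) = app a s and succ' a (s, m, M) = (succ a s, min m (cost a), max M (cost a)). Then for every nonempty list of actions π and state s: π is executable from s in the base system if and only if π is executable from (s, maxC, minC) in the augmented system; and in that case the final augmented state is (t, m, M), where t is the final base state, m is the minimum of the list π.map cost, M is its maximum, and M − m equals the Range R(π) of the plan's cost list. -/

import Mathlib

/-- A list of actions is executable from a state. -/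
def Exec {S A : Type*} (app : A → S → Prop) (succ : A → S → S) : List A → S → Prop
  | [], _ => True
  | a :: π, s => app a s ∧ Exec app succ π (succ a s)

/-- Maximum of a list of naturals (0 for the empty list). -/
def listMax (l : List ℕ) : ℕ := l.foldr max 0

/-- Minimum of a list of naturals (0 for the empty list). -/
def listMin : List ℕ → ℕ
  | [] => 0
  | a :: t => t.foldr min a

/-- Range of a list of naturals: max minus min. -/
def Range (l : List ℕ) : ℕ := listMax l - listMin l


private lemma foldr_max_base (x : ℕ) (l : List ℕ) :
    l.foldr max x = max x (l.foldr max 0) := by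
  induction l with
  | nil => simp
  | cons b u ih => simp [List.foldr_cons, ih]; ac_rfl

private lemma exec_aug_iff {S A : Type*}
    (app : A → S → Prop) (succ : A → S → S) (cost : A → ℕ) :
    ∀ (π : List A) (s : S) (m M : ℕ),
      Exec (fun a (p : S × ℕ × ℕ) => app a p.1)
        (fun a p => (succ a p.1, min p.2.1 (cost a), max p.2.2 (cost a)))
        π (s, m, M) ↔ Exec app succ π s := by
  intro π
  induction π with
  | nil => intro s m M; simp [Exec]
  | cons a t ih => intro s m M; simp [Exec, ih]

private lemma foldl_aug {S A : Type*}
    (succ : A → S → S) (cost : A → ℕ) :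
    ∀ (π : List A) (s : S) (m M : ℕ),
      π.foldl (fun (p : S × ℕ × ℕ) a =>
          (succ a p.1, min p.2.1 (cost a), max p.2.2 (cost a))) (s, m, M)
        = (π.foldl (fun t a => succ a t) s,
           (π.map cost).foldl min m, (π.map cost).foldl max M) := by
  intro π
  induction π with
  | nil => intros; rfl
  | cons a t ih => intro s m M; simp [List.foldl_cons, ih]

theorem compilation_range_sound_complete {S A : Type*}
    (app : A → S → Prop) (succ : A → S → S) (cost : A → ℕ)
    (minC maxC : ℕ) (hmin : ∀ a : A, minC ≤ cost a) (hmax : ∀ a : A, cost a ≤ maxC) :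
    ∀ (π : List A) (s : S), π ≠ [] →
      (Exec app succ π s ↔
        Exec (fun a (p : S × ℕ × ℕ) => app a p.1)
          (fun a p => (succ a p.1, min p.2.1 (cost a), max p.2.2 (cost a)))
          π (s, maxC, minC)) ∧
      (Exec app succ π s →
        ∃ m M : ℕ,
          π.foldl (fun (p : S × ℕ × ℕ) a =>
              (succ a p.1, min p.2.1 (cost a), max p.2.2 (cost a))) (s, maxC, minC)
            = (π.foldl (fun t a => succ a t) s, m, M)
          ∧ m = listMin (π.map cost)
          ∧ M = listMax (π.map cost)
          ∧ M - m = Range (π.map cost)) := by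
  intro π s hπ
  constructor
  · exact (exec_aug_iff app succ cost π s maxC minC).symm
  · intro _
    obtain ⟨a, t, rfl⟩ := List.exists_cons_of_ne_nil hπ
    have hm : ((a :: t).map cost).foldl min maxC = listMin ((a :: t).map cost) := by
      have h1 : min maxC (cost a) = cost a := min_eq_right (hmax a)
      simp only [List.map_cons, List.foldl_cons, h1, listMin]
      exact List.foldl_eq_foldr (f := min)
    have hM : ((a :: t).map cost).foldl max minC = listMax ((a :: t).map cost) := by
      have h1 : max minC (cost a) = cost a := max_eq_right (hmin a)
      simp only [List.map_cons, List.foldl_cons, h1, listMax, List.foldr_cons]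
      rw [List.foldl_eq_foldr (f := max),
        foldr_max_base (cost a) (t.map cost)]
    exact ⟨_, _, foldl_aug succ cost _ s maxC minC, hm, hM, by rw [hm, hM]; rfl⟩
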